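/- If additionally the corrupted class T(y) is drawn uniformly at random from the K-1 classes other than y, and the loss satisfies Σ_{c=1}^K ∇_w ℓ(c, f(x,w)) = 0, then the expectation over T of the noisy expected gradient equals (1 - ηK/(K-1)) ∇_w ℓ(y, f(x,w)); in particular, when η < (K-1)/K this is a positive multiple of the clean gradient. -/

import Mathlib

/-- If the flipped class `T(y)` is drawn uniformly from the `K-1` classes other
than `y` and the per-class gradients sum to zero, then the expectation over `T`
of the noisy expected gradient equals `(1 - ηK/(K-1)) ∇ℓ(y)`; in particular it
is a positive multiple of the clean gradient when `η < (K-1)/K`. -/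
theorem flip_noise_uniform_target_expected_gradient (K d : ℕ) (hK : 2 ≤ K)
    (g : Fin K → EuclideanSpace ℝ (Fin d) → ℝ)
    (hdiff : ∀ c, Differentiable ℝ (g c))
    (hsym : ∀ w, ∑ c : Fin K, fderiv ℝ (g c) w = 0)
    (η : ℝ) (hη0 : 0 ≤ η) (hη1 : η ≤ 1)
    (y : Fin K) (w : EuclideanSpace ℝ (Fin d)) :
    (((K : ℝ) - 1)⁻¹ • ∑ c ∈ Finset.univ.erase y,
        ((1 - η) • fderiv ℝ (g y) w + η • fderiv ℝ (g c) w))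
      = (1 - η * K / ((K : ℝ) - 1)) • fderiv ℝ (g y) w ∧
    (η < ((K : ℝ) - 1) / K → 0 < 1 - η * K / ((K : ℝ) - 1)) := by
  have hKpos : (0:ℝ) < (K:ℝ) - 1 := by
    have : (2:ℝ) ≤ (K:ℝ) := by exact_mod_cast hK
    linarith
  have hKne : ((K:ℝ) - 1) ≠ 0 := ne_of_gt hKpos
  constructor
  · have herase : ∑ c ∈ Finset.univ.erase y, fderiv ℝ (g c) w
        = - fderiv ℝ (g y) w := by
      have h := hsym w
      rw [← Finset.add_sum_erase _ _ (Finset.mem_univ y)] at h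
      linear_combination (norm := abel) h
    have hcard : (Finset.univ.erase y).card = K - 1 := by
      simp [Finset.card_erase_of_mem]
    rw [Finset.sum_add_distrib, Finset.sum_const, hcard, ← Finset.smul_sum, herase]
    have hcast : ((K - 1 : ℕ) : ℝ) = (K:ℝ) - 1 := by
      have : 1 ≤ K := by omega
      push_cast [this]; ring
    rw [smul_add, smul_smul, ← Nat.cast_smul_eq_nsmul ℝ, hcast, smul_smul, smul_smul,
      smul_neg, ← neg_smul, ← add_smul]
    congr 1
    field_simp
    ring
  · intro h
    have hKK : (0:ℝ) < (K:ℝ) := by linarith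
    rw [sub_pos, div_lt_one hKpos]
    calc η * K < (((K:ℝ)-1)/K) * K := by
          apply mul_lt_mul_of_pos_right h hKK
      _ = (K:ℝ) - 1 := by field_simp
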